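/- arXiv:2004.02336 — 2 statements merged into one kernel-verified Lean document; each statement's English description precedes it below -/
import Mathlib

section
/- Let M be a d x d symmetric PSD matrix with orthonormal eigenvectors, let U_hat be the d x r matrix of eigenvectors of M with eigenvalue strictly greater than a threshold mu, and U_hat_c the d x (d-r) matrix of the remaining eigenvectors (so [U_hat, U_hat_c] is orthogonal). If V is a d x L matrix with orthonormal columns and there exists epsilon in [0,1) and a matrix Q with ||Q||_2 <= 1 such that ||U_hat_c - W Q||_2 <= epsilon for some d x (d-r) matrix W with orthonormal columns whose column span is orthogonal to that of V, then ||U_hat_c^T V||_2 <= sqrt(2 epsilon). -/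
open Matrix

/-- Spectral norm of a real matrix: operator norm w.r.t. Euclidean norms. -/
noncomputable def specNorm {m n : ℕ} (M : Matrix (Fin m) (Fin n) ℝ) : ℝ :=
  ‖LinearMap.toContinuousLinearMap (Matrix.toEuclideanLin M)‖

open scoped Matrix.Norms.L2Operator in
lemma specNorm_eq_norm {m n : ℕ} (A : Matrix (Fin m) (Fin n) ℝ) : specNorm A = ‖A‖ :=
  (Matrix.l2_opNorm_def A).symm

theorem stmt9 {d r L : ℕ} (hr : r ≤ d)
    (M : Matrix (Fin d) (Fin d) ℝ) (hsym : M.IsSymm)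
    (hpsd : ∀ v : Fin d → ℝ, 0 ≤ v ⬝ᵥ M.mulVec v)
    (mu : ℝ)
    (Uh : Matrix (Fin d) (Fin r) ℝ) (Uc : Matrix (Fin d) (Fin (d - r)) ℝ)
    -- [Uh, Uc] is an orthogonal matrix
    (hUh : Uhᵀ * Uh = 1) (hUc : Ucᵀ * Uc = 1) (hUhUc : Uhᵀ * Uc = 0)
    (hspan : Uh * Uhᵀ + Uc * Ucᵀ = 1)
    -- columns of Uh are eigenvectors with eigenvalue > mu, columns of Uc the rest
    (alpha : Fin r → ℝ) (beta : Fin (d - r) → ℝ)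
    (heigUh : ∀ i : Fin r, M.mulVec (fun k => Uh k i) = alpha i • fun k => Uh k i)
    (heigUc : ∀ i : Fin (d - r), M.mulVec (fun k => Uc k i) = beta i • fun k => Uc k i)
    (halpha : ∀ i, mu < alpha i) (hbeta : ∀ i, beta i ≤ mu)
    (V : Matrix (Fin d) (Fin L) ℝ) (hV : Vᵀ * V = 1)
    (W : Matrix (Fin d) (Fin (d - r)) ℝ) (hW : Wᵀ * W = 1) (hWV : Wᵀ * V = 0)
    (ε : ℝ) (hε : ε ∈ Set.Ico (0:ℝ) 1)
    (Q : Matrix (Fin (d - r)) (Fin (d - r)) ℝ) (hQ : specNorm Q ≤ 1)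
    (happrox : specNorm (Uc - W * Q) ≤ ε) :
    specNorm (Ucᵀ * V) ≤ Real.sqrt (2 * ε) := by
  obtain ⟨hε0, hε1⟩ := hε
  open scoped Matrix.Norms.L2Operator in
  simp only [specNorm_eq_norm] at *
  -- key identity: Ucᵀ V = (Uc - W Q)ᵀ V since Wᵀ V = 0
  have key : Ucᵀ * V = (Uc - W * Q)ᵀ * V := by
    rw [transpose_sub, transpose_mul, Matrix.sub_mul, Matrix.mul_assoc, hWV,
      Matrix.mul_zero, sub_zero]
  have htr : ∀ {a b : ℕ} (A : Matrix (Fin a) (Fin b) ℝ), ‖Aᵀ‖ = ‖A‖ := by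
    intro a b A
    have := Matrix.l2_opNorm_conjTranspose A
    simpa [Matrix.conjTranspose_eq_transpose_of_trivial] using this
  have hVnorm : ‖V‖ ≤ 1 := by
    have h1 : ‖Vᵀ * V‖ = ‖V‖ * ‖V‖ := by
      have := Matrix.l2_opNorm_conjTranspose_mul_self V
      simpa [Matrix.conjTranspose_eq_transpose_of_trivial] using this
    have hone : ‖(1 : Matrix (Fin L) (Fin L) ℝ)‖ ≤ 1 := by
      rw [Matrix.cstar_norm_def, _root_.map_one, ContinuousLinearMap.one_def]
      exact ContinuousLinearMap.norm_id_le
    have h2 : ‖V‖ * ‖V‖ ≤ 1 := by rw [← h1, hV]; exact hone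
    nlinarith [norm_nonneg V]
  have hbound : ‖Ucᵀ * V‖ ≤ ε := by
    rw [key]
    calc ‖(Uc - W * Q)ᵀ * V‖ ≤ ‖(Uc - W * Q)ᵀ‖ * ‖V‖ := Matrix.l2_opNorm_mul _ _
      _ ≤ ε * 1 := by
          rw [htr]
          exact mul_le_mul happrox hVnorm (norm_nonneg _)
            (le_trans (norm_nonneg _) happrox)
      _ = ε := mul_one ε
  refine hbound.trans ?_
  have hs := Real.sq_sqrt (by linarith : (0:ℝ) ≤ 2 * ε)
  have hs0 := Real.sqrt_nonneg (2 * ε)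
  nlinarith [sq_nonneg (Real.sqrt (2 * ε) - ε), sq_nonneg (Real.sqrt (2 * ε) + ε)]
end

section
/- Let Sigma and Sigma_hat be d x d symmetric PSD matrices with eigenvalues lambda_1 >= ... >= lambda_d and lambda_hat_1 >= ... >= lambda_hat_d respectively. Let U_{<= (1-2delta) lambda_L} be the matrix of eigenvectors of Sigma with eigenvalues at most (1-2delta) lambda_L, and let U_hat_{> (1-delta) lambda_hat_L} and U_hat_{<= (1-delta) lambda_hat_L} be the matrices of eigenvectors of Sigma_hat with eigenvalues above and at most (1-delta) lambda_hat_L respectively. If V_L is a d x L matrix with orthonormal columns satisfying ||U_hat_{<= (1-delta) lambda_hat_L}^T V_L||_2 <= epsilon, then ||U_{<= (1-2delta) lambda_L}^T V_L||_2 <= ||Sigma - Sigma_hat||_2 / ((1-delta)(lambda_hat_L - lambda_L) + delta lambda_L) + epsilon, provided the denominator is positive. -/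
open Matrix Finset
open scoped Matrix.Norms.L2Operator

lemma specNorm_eq {m n : ℕ} (M : Matrix (Fin m) (Fin n) ℝ) : specNorm M = ‖M‖ := rfl

lemma aux_vmv_mul_vmv {d : ℕ} (a b c e : Fin d → ℝ) :
    vecMulVec a b * vecMulVec c e = (b ⬝ᵥ c) • vecMulVec a e := by
  ext i j
  simp only [mul_apply, vecMulVec_apply, Matrix.smul_apply, smul_eq_mul, dotProduct, Finset.sum_mul]
  exact Finset.sum_congr rfl fun k _ => by ring

lemma aux_mul_vmv {d : ℕ} (M : Matrix (Fin d) (Fin d) ℝ) (a b : Fin d → ℝ) :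
    M * vecMulVec a b = vecMulVec (M *ᵥ a) b := by
  ext i j
  simp only [mul_apply, vecMulVec_apply, mulVec, dotProduct, Finset.sum_mul]
  exact Finset.sum_congr rfl fun k _ => by ring

lemma aux_vmv_smul_left {d : ℕ} (c : ℝ) (a b : Fin d → ℝ) :
    vecMulVec (c • a) b = c • vecMulVec a b := by
  ext i j
  simp [vecMulVec_apply, mul_assoc]

lemma aux_sum_mul_sum {d : ℕ} (w : Fin d → Fin d → ℝ)
    (horth : ∀ i j, w i ⬝ᵥ w j = if i = j then (1:ℝ) else 0)
    (s t : Finset (Fin d)) (c e : Fin d → ℝ) :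
    (∑ i ∈ s, c i • vecMulVec (w i) (w i)) * (∑ j ∈ t, e j • vecMulVec (w j) (w j))
      = ∑ i ∈ s ∩ t, (c i * e i) • vecMulVec (w i) (w i) := by
  rw [Finset.sum_mul_sum]
  have hterm : ∀ i ∈ s, ∀ j ∈ t,
      (c i • vecMulVec (w i) (w i)) * (e j • vecMulVec (w j) (w j))
        = if i = j then (c i * e i) • vecMulVec (w i) (w i) else 0 := by
    intro i _ j _
    rw [smul_mul_assoc, mul_smul_comm, aux_vmv_mul_vmv, horth]
    by_cases h : i = j
    · subst h; simp [smul_smul]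
    · simp [h]
  calc (∑ i ∈ s, ∑ j ∈ t, (c i • vecMulVec (w i) (w i)) * (e j • vecMulVec (w j) (w j)))
      = ∑ i ∈ s, ∑ j ∈ t, (if i = j then (c i * e i) • vecMulVec (w i) (w i) else 0) :=
        Finset.sum_congr rfl fun i hi => Finset.sum_congr rfl fun j hj => hterm i hi j hj
    _ = ∑ i ∈ s, (if i ∈ t then (c i * e i) • vecMulVec (w i) (w i) else 0) :=
        Finset.sum_congr rfl fun i _ => Finset.sum_ite_eq t i _
    _ = ∑ i ∈ s ∩ t, (c i * e i) • vecMulVec (w i) (w i) := by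
        rw [← Finset.sum_filter, Finset.filter_mem_eq_inter]

lemma aux_one_eq_sum {d : ℕ} (w : Fin d → Fin d → ℝ)
    (horth : ∀ i j, w i ⬝ᵥ w j = if i = j then (1:ℝ) else 0) :
    (1 : Matrix (Fin d) (Fin d) ℝ) = ∑ i, vecMulVec (w i) (w i) := by
  have hW : (Matrix.of w) * (Matrix.of w)ᵀ = 1 := by
    ext i j
    simpa [Matrix.mul_apply, dotProduct, Matrix.one_apply] using horth i j
  have hW' : (Matrix.of w)ᵀ * (Matrix.of w) = 1 := mul_eq_one_comm.mp hW
  ext a b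
  have h2 := congrFun (congrFun hW' a) b
  simp only [Matrix.mul_apply, Matrix.transpose_apply, Matrix.of_apply] at h2
  simp only [Matrix.sum_apply, vecMulVec_apply]
  rw [← h2]

lemma aux_norm_le_of_sq {m n : ℕ} (M : Matrix (Fin m) (Fin n) ℝ) {C : ℝ} (hC : 0 ≤ C)
    (h : ∀ x : Fin n → ℝ, (M *ᵥ x) ⬝ᵥ (M *ᵥ x) ≤ (C * C) * (x ⬝ᵥ x)) : ‖M‖ ≤ C := by
  rw [Matrix.l2_opNorm_def]
  refine ContinuousLinearMap.opNorm_le_bound _ hC fun x => ?_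
  have hdot : ∀ (k : ℕ) (v : Fin k → ℝ),
      ‖(WithLp.equiv 2 (Fin k → ℝ)).symm v‖ = Real.sqrt (v ⬝ᵥ v) := by
    intro k v
    rw [EuclideanSpace.norm_eq]
    congr 1
    simp [dotProduct, sq, Real.norm_eq_abs, abs_mul_abs_self]
  have hx : x = (WithLp.equiv 2 (Fin n → ℝ)).symm (WithLp.equiv 2 (Fin n → ℝ) x) := rfl
  set y : Fin n → ℝ := WithLp.equiv 2 (Fin n → ℝ) x with hy
  have hlhs : ‖(LinearEquiv.trans Matrix.toEuclideanLin LinearMap.toContinuousLinearMap M) x‖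
      = Real.sqrt ((M *ᵥ y) ⬝ᵥ (M *ᵥ y)) := by
    have : (LinearEquiv.trans Matrix.toEuclideanLin LinearMap.toContinuousLinearMap M) x
        = (WithLp.equiv 2 (Fin m → ℝ)).symm (M *ᵥ y) := rfl
    rw [this, hdot]
  have hxnorm : ‖x‖ = Real.sqrt (y ⬝ᵥ y) := by
    conv_lhs => rw [hx]
    rw [hdot]
  rw [hlhs, hxnorm]
  calc Real.sqrt ((M *ᵥ y) ⬝ᵥ (M *ᵥ y)) ≤ Real.sqrt ((C * C) * (y ⬝ᵥ y)) :=
        Real.sqrt_le_sqrt (h y)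
    _ = C * Real.sqrt (y ⬝ᵥ y) := by
        rw [Real.sqrt_mul (mul_nonneg hC hC), Real.sqrt_mul_self hC]

lemma aux_mulVec_dot_self {d L : ℕ} (V : Matrix (Fin d) (Fin L) ℝ) (hV : Vᵀ * V = 1)
    (x : Fin L → ℝ) : (V *ᵥ x) ⬝ᵥ (V *ᵥ x) = x ⬝ᵥ x := by
  rw [Matrix.dotProduct_mulVec, ← Matrix.mulVec_transpose, Matrix.mulVec_mulVec, hV,
    Matrix.one_mulVec]

lemma aux_norm_V_le {d L : ℕ} (V : Matrix (Fin d) (Fin L) ℝ) (hV : Vᵀ * V = 1) : ‖V‖ ≤ 1 := by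
  refine aux_norm_le_of_sq V zero_le_one fun x => ?_
  rw [aux_mulVec_dot_self V hV x, one_mul, one_mul]

lemma aux_vmv_mulVec {d : ℕ} (a b x : Fin d → ℝ) :
    vecMulVec a b *ᵥ x = (b ⬝ᵥ x) • a := by
  ext i
  simp only [Matrix.mulVec, vecMulVec_apply, dotProduct, Pi.smul_apply, smul_eq_mul,
    Finset.sum_mul, Finset.mul_sum]
  exact Finset.sum_congr rfl fun k _ => by ring

lemma aux_vmv_transpose {d : ℕ} (a b : Fin d → ℝ) :
    (vecMulVec a b)ᵀ = vecMulVec b a := by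
  ext i j; simp [vecMulVec_apply, mul_comm]

lemma aux_WtW {d : ℕ} (w : Fin d → Fin d → ℝ)
    (horth : ∀ i j, w i ⬝ᵥ w j = if i = j then (1:ℝ) else 0) :
    (Matrix.of w)ᵀ * (Matrix.of w) = 1 := by
  refine mul_eq_one_comm.mp ?_
  ext i j
  simpa [Matrix.mul_apply, dotProduct, Matrix.one_apply] using horth i j

lemma aux_parseval {d : ℕ} (w : Fin d → Fin d → ℝ)
    (horth : ∀ i j, w i ⬝ᵥ w j = if i = j then (1:ℝ) else 0) (x : Fin d → ℝ) :
    ∑ i, (w i ⬝ᵥ x) ^ 2 = x ⬝ᵥ x := by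
  have h := aux_mulVec_dot_self (Matrix.of w) (aux_WtW w horth) x
  rw [← h]
  simp only [dotProduct, Matrix.mulVec, sq]
  rfl

lemma aux_norm_sum_le {d : ℕ} (w : Fin d → Fin d → ℝ)
    (horth : ∀ i j, w i ⬝ᵥ w j = if i = j then (1:ℝ) else 0)
    (s : Finset (Fin d)) (c : Fin d → ℝ) {C : ℝ} (hC : 0 ≤ C)
    (hc : ∀ i ∈ s, |c i| ≤ C) :
    ‖(∑ i ∈ s, c i • vecMulVec (w i) (w i) : Matrix (Fin d) (Fin d) ℝ)‖ ≤ C := by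
  set M : Matrix (Fin d) (Fin d) ℝ := ∑ i ∈ s, c i • vecMulVec (w i) (w i) with hM
  refine aux_norm_le_of_sq M hC fun x => ?_
  have hMsym : Mᵀ = M := by
    rw [hM, Matrix.transpose_sum]
    exact Finset.sum_congr rfl fun i _ => by rw [Matrix.transpose_smul, aux_vmv_transpose]
  have h1 : (M *ᵥ x) ⬝ᵥ (M *ᵥ x) = ((Mᵀ * M) *ᵥ x) ⬝ᵥ x := by
    rw [Matrix.dotProduct_mulVec, ← Matrix.mulVec_transpose, Matrix.mulVec_mulVec]
  have h2 : Mᵀ * M = ∑ i ∈ s, (c i * c i) • vecMulVec (w i) (w i) := by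
    rw [hMsym, hM, aux_sum_mul_sum w horth, Finset.inter_self]
  rw [h1, h2]
  have h3 : ((∑ i ∈ s, (c i * c i) • vecMulVec (w i) (w i)) *ᵥ x) ⬝ᵥ x
      = ∑ i ∈ s, (c i * c i) * (w i ⬝ᵥ x) ^ 2 := by
    have hsum : (∑ i ∈ s, (c i * c i) • vecMulVec (w i) (w i)) *ᵥ x
        = ∑ i ∈ s, ((c i * c i) • vecMulVec (w i) (w i)) *ᵥ x := by
      ext j
      simp [Matrix.mulVec, dotProduct, Matrix.sum_apply, Finset.sum_mul, Finset.sum_comm (s := s)]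
    have hdsum : (∑ i ∈ s, ((c i * c i) • vecMulVec (w i) (w i)) *ᵥ x) ⬝ᵥ x
        = ∑ i ∈ s, (((c i * c i) • vecMulVec (w i) (w i)) *ᵥ x) ⬝ᵥ x := by
      simp only [dotProduct, Finset.sum_apply, Finset.sum_mul]
      exact Finset.sum_comm
    rw [hsum, hdsum]
    refine Finset.sum_congr rfl fun i _ => ?_
    rw [Matrix.smul_mulVec, aux_vmv_mulVec, smul_dotProduct,
      smul_dotProduct, smul_eq_mul, smul_eq_mul]
    ring
  rw [h3, ← aux_parseval w horth x]
  calc ∑ i ∈ s, (c i * c i) * (w i ⬝ᵥ x) ^ 2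
      ≤ ∑ i ∈ s, (C * C) * (w i ⬝ᵥ x) ^ 2 := by
        refine Finset.sum_le_sum fun i hi => ?_
        have h4 : c i * c i ≤ C * C := by
          nlinarith [abs_mul_abs_self (c i), hc i hi, abs_nonneg (c i)]
        exact mul_le_mul_of_nonneg_right h4 (sq_nonneg _)
    _ ≤ ∑ i, (C * C) * (w i ⬝ᵥ x) ^ 2 := by
        refine Finset.sum_le_sum_of_subset_of_nonneg (Finset.subset_univ s) fun i _ _ =>
          mul_nonneg (mul_nonneg hC hC) (sq_nonneg _)
    _ = (C * C) * ∑ i, (w i ⬝ᵥ x) ^ 2 := by rw [Finset.mul_sum]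

lemma aux_spec_decomp {d : ℕ} (Sig : Matrix (Fin d) (Fin d) ℝ) (lam : Fin d → ℝ)
    (u : Fin d → Fin d → ℝ)
    (horth : ∀ i j, u i ⬝ᵥ u j = if i = j then (1:ℝ) else 0)
    (heig : ∀ l, Sig *ᵥ u l = lam l • u l) :
    Sig = ∑ i, lam i • vecMulVec (u i) (u i) := by
  calc Sig = Sig * 1 := (mul_one _).symm
    _ = Sig * ∑ i, vecMulVec (u i) (u i) := by rw [← aux_one_eq_sum u horth]
    _ = ∑ i, lam i • vecMulVec (u i) (u i) := by
        rw [Finset.mul_sum]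
        exact Finset.sum_congr rfl fun i _ => by
          rw [aux_mul_vmv, heig, aux_vmv_smul_left]

theorem stmt10 {d L : ℕ} (hL0 : 0 < L) (hLd : L ≤ d)
    (Sig Sigh : Matrix (Fin d) (Fin d) ℝ) (hsym : Sig.IsSymm) (hsymh : Sigh.IsSymm)
    (hpsd : ∀ v : Fin d → ℝ, 0 ≤ v ⬝ᵥ Sig.mulVec v)
    (hpsdh : ∀ v : Fin d → ℝ, 0 ≤ v ⬝ᵥ Sigh.mulVec v)
    (lam : Fin d → ℝ) (u : Fin d → Fin d → ℝ)
    (lamh : Fin d → ℝ) (uh : Fin d → Fin d → ℝ)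
    (hanti : ∀ i j : Fin d, i ≤ j → lam j ≤ lam i)
    (hantih : ∀ i j : Fin d, i ≤ j → lamh j ≤ lamh i)
    (horth : ∀ i j : Fin d, u i ⬝ᵥ u j = if i = j then 1 else 0)
    (horthh : ∀ i j : Fin d, uh i ⬝ᵥ uh j = if i = j then 1 else 0)
    (heig : ∀ l, Sig.mulVec (u l) = lam l • u l)
    (heigh : ∀ l, Sigh.mulVec (uh l) = lamh l • uh l)
    (δ : ℝ) (hδ : δ ∈ Set.Ioo (0:ℝ) (1/2))
    -- projection onto the eigenvectors of Sig with eigenvalue ≤ (1-2δ)·λ_L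
    (PU : Matrix (Fin d) (Fin d) ℝ)
    (hPU : PU = ∑ l ∈ Finset.univ.filter
        (fun l => lam l ≤ (1 - 2*δ) * lam ⟨L - 1, by omega⟩), vecMulVec (u l) (u l))
    -- projection onto the eigenvectors of Sigh with eigenvalue ≤ (1-δ)·λ̂_L
    (PUh : Matrix (Fin d) (Fin d) ℝ)
    (hPUh : PUh = ∑ l ∈ Finset.univ.filter
        (fun l => lamh l ≤ (1 - δ) * lamh ⟨L - 1, by omega⟩), vecMulVec (uh l) (uh l))
    (V : Matrix (Fin d) (Fin L) ℝ) (hV : Vᵀ * V = 1)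
    (ε : ℝ) (hVh : specNorm (PUh * V) ≤ ε)
    (hden : 0 < (1 - δ) * (lamh ⟨L - 1, by omega⟩ - lam ⟨L - 1, by omega⟩)
        + δ * lam ⟨L - 1, by omega⟩) :
    specNorm (PU * V) ≤ specNorm (Sig - Sigh) /
        ((1 - δ) * (lamh ⟨L - 1, by omega⟩ - lam ⟨L - 1, by omega⟩)
          + δ * lam ⟨L - 1, by omega⟩) + ε := by
  obtain ⟨hδ0, hδhalf⟩ := hδ
  rw [specNorm_eq] at hVh ⊢
  -- eigenvalues are nonnegative
  have hlam_nonneg : ∀ i, 0 ≤ lam i := by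
    intro i
    have h := hpsd (u i)
    rw [heig i, dotProduct_smul, horth i i] at h
    simpa using h
  have hlamh_nonneg : ∀ i, 0 ≤ lamh i := by
    intro i
    have h := hpsdh (uh i)
    rw [heigh i, dotProduct_smul, horthh i i] at h
    simpa using h
  set idx : Fin d := ⟨L - 1, by omega⟩ with hidx
  set α : ℝ := (1 - 2*δ) * lam idx with hα
  set μ : ℝ := (1 - δ) * lamh idx with hμ
  set D : ℝ := (1 - δ) * (lamh idx - lam idx) + δ * lam idx with hD
  have hα0 : 0 ≤ α := mul_nonneg (by linarith) (hlam_nonneg idx)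
  have hgD : D = μ - α := by rw [hD, hμ, hα]; ring
  have hμpos : 0 < μ := by
    have : μ = D + α := by rw [hgD]; ring
    linarith
  set S : Finset (Fin d) := Finset.univ.filter (fun l => lam l ≤ α) with hS
  set T : Finset (Fin d) := Finset.univ.filter (fun j => ¬ lamh j ≤ μ) with hT
  set A : Matrix (Fin d) (Fin d) ℝ := ∑ i ∈ S, lam i • vecMulVec (u i) (u i) with hA
  set B : Matrix (Fin d) (Fin d) ℝ := ∑ j ∈ T, (lamh j)⁻¹ • vecMulVec (uh j) (uh j) with hB
  set Qh : Matrix (Fin d) (Fin d) ℝ := ∑ j ∈ T, (1:ℝ) • vecMulVec (uh j) (uh j) with hQh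
  have hPU' : PU = ∑ i ∈ S, (1:ℝ) • vecMulVec (u i) (u i) := by
    rw [hPU]; simp [hS]
  have hTpos : ∀ j ∈ T, μ < lamh j := by
    intro j hj
    have := (Finset.mem_filter.mp hj).2
    exact not_le.mp this
  -- identity pieces
  have hQB : Qh * B = B := by
    rw [hQh, hB, aux_sum_mul_sum uh horthh, Finset.inter_self]
    exact Finset.sum_congr rfl fun j _ => by rw [one_mul]
  have hSighB : Sigh * B = Qh := by
    rw [hB, hQh, Finset.mul_sum]
    refine Finset.sum_congr rfl fun j hj => ?_
    have hne : lamh j ≠ 0 := ne_of_gt (lt_trans hμpos (hTpos j hj))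
    rw [mul_smul_comm, aux_mul_vmv, heigh, aux_vmv_smul_left, smul_smul,
      inv_mul_cancel₀ hne]
  have hSig_dec : Sig = ∑ i, lam i • vecMulVec (u i) (u i) :=
    aux_spec_decomp Sig lam u horth heig
  have hPUSig : PU * Sig = A := by
    rw [hPU', hSig_dec, aux_sum_mul_sum u horth, Finset.inter_univ, hA]
    exact Finset.sum_congr rfl fun i _ => by rw [one_mul]
  have hAPU : A * PU = A := by
    rw [hA, hPU', aux_sum_mul_sum u horth, Finset.inter_self]
    exact Finset.sum_congr rfl fun i _ => by rw [mul_one]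
  have honeuh : (1 : Matrix (Fin d) (Fin d) ℝ) = PUh + Qh := by
    rw [aux_one_eq_sum uh horthh, hPUh, hQh]
    simp only [one_smul]
    exact (Finset.sum_filter_add_sum_filter_not Finset.univ _ _).symm
  set X : Matrix (Fin d) (Fin d) ℝ := PU * Qh with hX
  have hXid : X = A * X * B + PU * (Sigh - Sig) * B := by
    have h1 : X = A * B + PU * (Sigh - Sig) * B := by
      calc X = PU * (Sigh * B) := by rw [hSighB]
        _ = (PU * Sig) * B + PU * (Sigh - Sig) * B := by noncomm_ring
        _ = A * B + PU * (Sigh - Sig) * B := by rw [hPUSig]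
    have h2 : A * B = A * X * B := by
      calc A * B = (A * PU) * (Qh * B) := by rw [hAPU, hQB]
        _ = A * (PU * Qh) * B := by noncomm_ring
        _ = A * X * B := by rw [← hX]
    conv_lhs => rw [h1]
    rw [h2]
  -- norm bounds
  have hnA : ‖A‖ ≤ α := by
    refine aux_norm_sum_le u horth S lam hα0 fun i hi => ?_
    rw [abs_of_nonneg (hlam_nonneg i)]
    exact (Finset.mem_filter.mp hi).2
  have hnB : ‖B‖ ≤ μ⁻¹ := by
    refine aux_norm_sum_le uh horthh T (fun j => (lamh j)⁻¹)
      (inv_nonneg.mpr hμpos.le) fun j hj => ?_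
    have hj' := hTpos j hj
    rw [abs_of_nonneg (inv_nonneg.mpr (by linarith))]
    exact inv_anti₀ hμpos hj'.le
  have hnPU : ‖PU‖ ≤ 1 := by
    rw [hPU']
    refine aux_norm_sum_le u horth S 1 zero_le_one fun i _ => by simp
  have hnV : ‖V‖ ≤ 1 := aux_norm_V_le V hV
  set e : ℝ := ‖Sigh - Sig‖ with he
  have he0 : 0 ≤ e := norm_nonneg _
  have hXbound : ‖X‖ ≤ ‖A‖ * ‖X‖ * ‖B‖ + ‖PU‖ * e * ‖B‖ := by
    calc ‖X‖ = ‖A * X * B + PU * (Sigh - Sig) * B‖ := by rw [← hXid]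
      _ ≤ ‖A * X * B‖ + ‖PU * (Sigh - Sig) * B‖ := norm_add_le _ _
      _ ≤ ‖A‖ * ‖X‖ * ‖B‖ + ‖PU‖ * e * ‖B‖ := by
          refine add_le_add ?_ ?_
          · calc ‖A * X * B‖ ≤ ‖A * X‖ * ‖B‖ := Matrix.l2_opNorm_mul _ _
              _ ≤ ‖A‖ * ‖X‖ * ‖B‖ :=
                mul_le_mul_of_nonneg_right (Matrix.l2_opNorm_mul _ _) (norm_nonneg _)
          · calc ‖PU * (Sigh - Sig) * B‖ ≤ ‖PU * (Sigh - Sig)‖ * ‖B‖ :=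
                Matrix.l2_opNorm_mul _ _
              _ ≤ ‖PU‖ * e * ‖B‖ :=
                mul_le_mul_of_nonneg_right (Matrix.l2_opNorm_mul _ _) (norm_nonneg _)
  have hXfin : ‖X‖ ≤ e / D := by
    have e1 : ‖A‖ * ‖X‖ * ‖B‖ ≤ α * ‖X‖ * μ⁻¹ :=
      mul_le_mul (mul_le_mul hnA le_rfl (norm_nonneg X) hα0) hnB (norm_nonneg B)
        (mul_nonneg hα0 (norm_nonneg X))
    have e2 : ‖PU‖ * e * ‖B‖ ≤ 1 * e * μ⁻¹ :=
      mul_le_mul (mul_le_mul hnPU le_rfl he0 zero_le_one) hnB (norm_nonneg B)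
        (by positivity)
    have hX2 : ‖X‖ ≤ α * ‖X‖ * μ⁻¹ + e * μ⁻¹ := by
      rw [one_mul] at e2
      linarith [hXbound]
    have hmul := mul_le_mul_of_nonneg_right hX2 hμpos.le
    have hr : (α * ‖X‖ * μ⁻¹ + e * μ⁻¹) * μ = α * ‖X‖ + e := by
      field_simp
    rw [hr] at hmul
    rw [le_div_iff₀ hden]
    have hexp : ‖X‖ * D = ‖X‖ * μ - α * ‖X‖ := by rw [hgD]; ring
    linarith
  have hε0 : 0 ≤ ε := le_trans (norm_nonneg _) hVh
  have hdecomp : PU * V = PU * (PUh * V) + X * V := by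
    calc PU * V = PU * ((PUh + Qh) * V) := by rw [← honeuh, Matrix.one_mul]
      _ = PU * (PUh * V) + (PU * Qh) * V := by
          rw [Matrix.add_mul, Matrix.mul_add, Matrix.mul_assoc]
      _ = PU * (PUh * V) + X * V := by rw [← hX]
  have hfinal : ‖PU * V‖ ≤ e / D + ε := by
    calc ‖PU * V‖ = ‖PU * (PUh * V) + X * V‖ := by rw [← hdecomp]
      _ ≤ ‖PU * (PUh * V)‖ + ‖X * V‖ := norm_add_le _ _
      _ ≤ ‖PU‖ * ‖PUh * V‖ + ‖X‖ * ‖V‖ :=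
          add_le_add (Matrix.l2_opNorm_mul _ _) (Matrix.l2_opNorm_mul _ _)
      _ ≤ 1 * ε + (e / D) * 1 := by
          refine add_le_add (mul_le_mul hnPU hVh (norm_nonneg _) zero_le_one) ?_
          exact mul_le_mul hXfin hnV (norm_nonneg V) (by positivity)
      _ = e / D + ε := by ring
  have hrev : e = ‖Sig - Sigh‖ := norm_sub_rev _ _
  rw [hrev] at hfinal
  exact hfinal
end
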